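/- arXiv:2001.04089 — 2 statements merged into one kernel-verified Lean document; each statement's English description precedes it below -/
import Mathlib

section
/- Every simple weight module over the Weyl superalgebra K_{m,n} is isomorphic, up to a parity change, to A(λ) for some λ ∈ ℂ^m, where a weight module is one on which d_1,...,d_m act diagonalizably. -/
/-! ### A concrete model of `A_{m,n}` and of the Witt superalgebra `W_{m,n}`

`A_{m,n} = ℂ[t₁^{±1},…,t_m^{±1}] ⊗ Λ(ξ₁,…,ξ_n)` has basis the monomials `t^α ξ_I`,
indexed by `AIdx m n = (Fin m → ℤ) × Finset (Fin n)`.  The Witt superalgebra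
`W_{m,n}` of superderivations of `A_{m,n}` has basis `t^α ξ_I d_i` and
`t^α ξ_I ∂/∂ξ_j` (`d_i = t_i ∂/∂t_i`), indexed by
`WIdx m n = (Fin m → ℤ) × Finset (Fin n) × (Fin m ⊕ Fin n)`. -/

/-- Inversion count: number of pairs `(a,b) ∈ I × J` with `a > b`. -/
def tauF {n : ℕ} (I J : Finset (Fin n)) : ℕ :=
  ((I ×ˢ J).filter fun p => p.2 < p.1).card

/-- The sign arising from `ξ_I · ξ_J = ε(I,J) ξ_{I ∪ J}`:  `(-1)^{τ(I,J)}` when `I, J`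
are disjoint and `0` otherwise. -/
noncomputable def epsF {n : ℕ} (I J : Finset (Fin n)) : ℂ :=
  if Disjoint I J then (-1 : ℂ) ^ tauF I J else 0

/-- Index set of the monomial basis `t^α ξ_I` of `A_{m,n}`. -/
abbrev AIdx (m n : ℕ) := (Fin m → ℤ) × Finset (Fin n)

/-- The underlying vector space of `A_{m,n}`. -/
abbrev ASp (m n : ℕ) := AIdx m n →₀ ℂ

/-- Index set of the basis `t^α ξ_I ∂` (`∂ = d_i` or `∂/∂ξ_j`) of `W_{m,n}`. -/
abbrev WIdx (m n : ℕ) := (Fin m → ℤ) × Finset (Fin n) × (Fin m ⊕ Fin n)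

/-- The underlying vector space of `W_{m,n}`. -/
abbrev WSp (m n : ℕ) := WIdx m n →₀ ℂ

/-- Product of two monomials of `A_{m,n}`. -/
noncomputable def mulMono {m n : ℕ} (u v : AIdx m n) : ASp m n :=
  epsF u.2 v.2 • Finsupp.single (u.1 + v.1, u.2 ∪ v.2) 1

/-- The (supercommutative) multiplication of `A_{m,n}`, as a bilinear map. -/
noncomputable def mulA (m n : ℕ) : ASp m n →ₗ[ℂ] ASp m n →ₗ[ℂ] ASp m n :=
  Finsupp.lsum ℂ fun u => LinearMap.toSpanSingleton ℂ _
    (Finsupp.lsum ℂ fun v => LinearMap.toSpanSingleton ℂ _ (mulMono u v))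

/-- A monomial of `A_{m,n}` multiplied with a basis element of `W_{m,n}`. -/
noncomputable def smulMonoW {m n : ℕ} (u : AIdx m n) (w : WIdx m n) : WSp m n :=
  epsF u.2 w.2.1 • Finsupp.single (u.1 + w.1, u.2 ∪ w.2.1, w.2.2) 1

/-- The action of `A_{m,n}` on `W_{m,n} = A_{m,n} Δ` by multiplication, bilinear. -/
noncomputable def smulAW (m n : ℕ) : ASp m n →ₗ[ℂ] WSp m n →ₗ[ℂ] WSp m n :=
  Finsupp.lsum ℂ fun u => LinearMap.toSpanSingleton ℂ _
    (Finsupp.lsum ℂ fun w => LinearMap.toSpanSingleton ℂ _ (smulMonoW u w))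

/-- The scalar produced when the derivation part `c` (`d_i` or `∂/∂ξ_j`) hits the
monomial `t^β ξ_J`. -/
noncomputable def dCoeff {m n : ℕ} (c : Fin m ⊕ Fin n) (β : Fin m → ℤ) (J : Finset (Fin n)) : ℂ :=
  match c with
  | Sum.inl i => (β i : ℂ)
  | Sum.inr j => if j ∈ J then (-1 : ℂ) ^ ((J.filter (· < j)).card) else 0

/-- The `ξ`-part of the monomial after applying the derivation part `c`. -/
def dSet {m n : ℕ} (c : Fin m ⊕ Fin n) (J : Finset (Fin n)) : Finset (Fin n) :=
  match c with
  | Sum.inl _ => J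
  | Sum.inr j => J.erase j

/-- The basis superderivation `t^α ξ_I ∂` (index `u`) applied to the monomial
`t^β ξ_J` (index `v`), as an element of `A_{m,n}`. -/
noncomputable def derMono {m n : ℕ} (u : WIdx m n) (v : AIdx m n) : ASp m n :=
  dCoeff u.2.2 v.1 v.2 • mulMono (u.1, u.2.1) (v.1, dSet u.2.2 v.2)

/-- The parity of a basis element `t^α ξ_I ∂` of `W_{m,n}`: `|I|` plus the parity of
the derivation part. -/
def parWIdx {m n : ℕ} (u : WIdx m n) : ℕ :=
  u.2.1.card + (match u.2.2 with | Sum.inl _ => 0 | Sum.inr _ => 1)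

/-- Attach a derivation part `b` to an element of `A_{m,n}`: `a ↦ a ∂_b`. -/
noncomputable def attachD {m n : ℕ} (b : Fin m ⊕ Fin n) : ASp m n →ₗ[ℂ] WSp m n :=
  Finsupp.lmapDomain ℂ ℂ (fun a => (a.1, a.2, b))

/-- The superbracket of two basis elements `x = t^α ξ_I ∂_a`, `y = t^β ξ_J ∂_b`:
`[x, y] = x(t^β ξ_J) ∂_b − (−1)^{|x||y|} y(t^α ξ_I) ∂_a`. -/
noncomputable def bracketMono {m n : ℕ} (u v : WIdx m n) : WSp m n :=
  attachD v.2.2 (derMono u (v.1, v.2.1)) -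
    ((-1 : ℂ) ^ (parWIdx u * parWIdx v)) • attachD u.2.2 (derMono v (u.1, u.2.1))

/-- The superbracket of `W_{m,n}`, as a bilinear map. -/
noncomputable def bracketW (m n : ℕ) : WSp m n →ₗ[ℂ] WSp m n →ₗ[ℂ] WSp m n :=
  Finsupp.lsum ℂ fun u => LinearMap.toSpanSingleton ℂ _
    (Finsupp.lsum ℂ fun v => LinearMap.toSpanSingleton ℂ _ (bracketMono u v))

/-- The `ℤ^m`-graded component `(W_{m,n})_α`, spanned by `t^α ξ_I d_i` and
`t^α ξ_I ∂/∂ξ_j`. -/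
noncomputable def Wgr (m n : ℕ) (α : Fin m → ℤ) : Submodule ℂ (WSp m n) :=
  Submodule.span ℂ
    {w | ∃ (I : Finset (Fin n)) (c : Fin m ⊕ Fin n), w = Finsupp.single (α, I, c) 1}

/-- The (`ℤ₂`-)homogeneous component of `W_{m,n}` of parity `p`. -/
noncomputable def Wpar (m n : ℕ) (p : ℕ) : Submodule ℂ (WSp m n) :=
  Submodule.span ℂ
    {w | ∃ u : WIdx m n, parWIdx u % 2 = p % 2 ∧ w = Finsupp.single u 1}

/-- The operator `d_i + λ_i` ingredient: the derivation `d_i = t_i ∂/∂t_i` of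
`A_{m,n}`, acting on the monomial `t^β ξ_J` by the scalar `β_i`. -/
noncomputable def dOpA (m n : ℕ) (i : Fin m) : Module.End ℂ (ASp m n) :=
  Finsupp.lsum ℂ fun u => LinearMap.toSpanSingleton ℂ _
    ((u.1 i : ℂ) • (Finsupp.single u 1 : ASp m n))

/-- The odd superderivation `∂/∂ξ_j` of `A_{m,n}`. -/
noncomputable def xiOpA (m n : ℕ) (j : Fin n) : Module.End ℂ (ASp m n) :=
  Finsupp.lsum ℂ fun u => LinearMap.toSpanSingleton ℂ _
    (if j ∈ u.2 then
      ((-1 : ℂ) ^ ((u.2.filter (· < j)).card)) •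
        (Finsupp.single (u.1, u.2.erase j) 1 : ASp m n)
     else 0)

/-- The homogeneous component of `A_{m,n}` of parity `q ∈ ℤ₂`. -/
noncomputable def Apar (m n : ℕ) (q : ZMod 2) : Submodule ℂ (ASp m n) :=
  Submodule.span ℂ
    {a | ∃ u : AIdx m n, ((u.2.card : ZMod 2) = q) ∧ a = Finsupp.single u 1}

lemma mulA_single_single {m n : ℕ} (u v : AIdx m n) :
    mulA m n (Finsupp.single u 1) (Finsupp.single v 1) = mulMono u v := by
  simp [mulA]

lemma tauF_empty_left {n : ℕ} (J : Finset (Fin n)) : tauF (∅ : Finset (Fin n)) J = 0 := by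
  simp [tauF]

lemma tauF_empty_right {n : ℕ} (I : Finset (Fin n)) : tauF I (∅ : Finset (Fin n)) = 0 := by
  simp [tauF]

lemma epsF_empty_left {n : ℕ} (J : Finset (Fin n)) : epsF (∅ : Finset (Fin n)) J = 1 := by
  simp [epsF, tauF]

lemma epsF_empty_right {n : ℕ} (I : Finset (Fin n)) : epsF I (∅ : Finset (Fin n)) = 1 := by
  simp [epsF, tauF]

lemma mulA_t_single {m n : ℕ} (α : Fin m → ℤ) (v : AIdx m n) :
    mulA m n (Finsupp.single (α, (∅ : Finset (Fin n))) 1) (Finsupp.single v 1)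
      = Finsupp.single (α + v.1, v.2) 1 := by
  simp [mulA_single_single, mulMono, epsF_empty_left]

lemma dOpA_apply {m n : ℕ} (i : Fin m) (b : ASp m n) (w : AIdx m n) :
    (dOpA m n i b) w = (w.1 i : ℂ) * b w := by
  induction b using Finsupp.induction_linear with
  | zero => simp
  | add f g hf hg => simp [hf, hg]; ring
  | single u c =>
    simp only [dOpA, Finsupp.lsum_single, LinearMap.toSpanSingleton_apply]
    rcases eq_or_ne u w with rfl | h
    · simp [Finsupp.single_apply, mul_comm]
    · simp [Finsupp.single_apply, h, Finsupp.single_eq_of_ne h]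

lemma xiOpA_single {m n : ℕ} (j : Fin n) (u : AIdx m n) :
    xiOpA m n j (Finsupp.single u 1) =
      if j ∈ u.2 then
        ((-1 : ℂ) ^ ((u.2.filter (· < j)).card)) • Finsupp.single (u.1, u.2.erase j) 1
      else 0 := by
  simp [xiOpA]

lemma tauF_singleton {n : ℕ} (j : Fin n) (J : Finset (Fin n)) :
    tauF ({j} : Finset (Fin n)) J = (J.filter (· < j)).card := by
  unfold tauF
  rw [Finset.singleton_product, Finset.filter_map, Finset.card_map]
  rfl

lemma pin_single {m n : ℕ} (j : Fin n) (u : AIdx m n) :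
    mulA m n (Finsupp.single ((0 : Fin m → ℤ), ({j} : Finset (Fin n))) 1)
        (xiOpA m n j (Finsupp.single u 1))
      = if j ∈ u.2 then Finsupp.single u 1 else 0 := by
  rw [xiOpA_single]
  by_cases h : j ∈ u.2
  · simp only [h, if_pos, map_smul, mulA_single_single, mulMono, epsF]
    have hd : Disjoint ({j} : Finset (Fin n)) (u.2.erase j) := by
      simp [Finset.disjoint_singleton_left]
    have ht : tauF ({j} : Finset (Fin n)) (u.2.erase j) = ((u.2.filter (· < j)).card) := by
      rw [tauF_singleton]
      congr 1
      ext x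
      simp only [Finset.mem_filter, Finset.mem_erase]
      exact ⟨fun ⟨⟨_, hx⟩, hlt⟩ => ⟨hx, hlt⟩, fun ⟨hx, hlt⟩ => ⟨⟨ne_of_lt hlt, hx⟩, hlt⟩⟩
    rw [if_pos hd, ht]
    rw [smul_smul, ← pow_add, ← two_mul, pow_mul]
    have : ((-1 : ℂ)) ^ 2 = 1 := by norm_num
    rw [this, one_pow, one_smul]
    congr 1
    ext : 1
    · simp
    · simp only
      ext x
      simp only [Finset.mem_union, Finset.mem_singleton, Finset.mem_erase]
      by_cases hx : x = j <;> simp [hx, h]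
  · simp [h]

lemma pin_apply {m n : ℕ} (j : Fin n) (b : ASp m n) (w : AIdx m n) :
    (mulA m n (Finsupp.single ((0 : Fin m → ℤ), ({j} : Finset (Fin n))) 1)
        (xiOpA m n j b)) w = if j ∈ w.2 then b w else 0 := by
  induction b using Finsupp.induction_linear with
  | zero => simp
  | add f g hf hg =>
    simp only [map_add, Finsupp.add_apply, hf, hg]
    by_cases h : j ∈ w.2 <;> simp [h]
  | single u c =>
    have : (Finsupp.single u c : ASp m n) = c • Finsupp.single u 1 := by
      rw [Finsupp.smul_single, smul_eq_mul, mul_one]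
    rw [this, map_smul, map_smul, Finsupp.smul_apply, pin_single]
    by_cases h : j ∈ u.2
    · rw [if_pos h]
      rcases eq_or_ne u w with rfl | hne
      · simp [h]
      · simp [Finsupp.single_eq_of_ne hne.symm]
    · rw [if_neg h]
      rcases eq_or_ne u w with rfl | hne
      · simp [h]
      · simp [Finsupp.single_eq_of_ne hne.symm]
      
lemma single_mem_of_mem {m n : ℕ} (K : Submodule ℂ (ASp m n))
    (hd : ∀ (i : Fin m) (b : ASp m n), b ∈ K → dOpA m n i b ∈ K)
    (hxi : ∀ (j : Fin n) (b : ASp m n), b ∈ K → xiOpA m n j b ∈ K)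
    (hm : ∀ (a b : ASp m n), b ∈ K → mulA m n a b ∈ K) :
    ∀ (N : ℕ) (b : ASp m n), b.support.card ≤ N → b ∈ K → b ≠ 0 →
      ∃ u : AIdx m n, Finsupp.single u 1 ∈ K := by
  intro N
  induction N with
  | zero =>
    intro b hc hK h0
    exact absurd (Finsupp.support_eq_empty.1 (Finset.card_eq_zero.1 (Nat.le_zero.1 hc))) h0
  | succ N ih =>
    intro b hc hK h0
    by_cases h1 : b.support.card = 1
    · obtain ⟨u, hc0, hb⟩ := Finsupp.card_support_eq_one.1 h1
      refine ⟨u, ?_⟩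
      have : (Finsupp.single u 1 : ASp m n) = (b u)⁻¹ • b := by
        nth_rewrite 2 [hb]
        rw [Finsupp.smul_single, smul_eq_mul, inv_mul_cancel₀ hc0]
      rw [this]
      exact K.smul_mem _ hK
    · have h2 : 1 < b.support.card := by
        rcases Nat.lt_or_ge 1 b.support.card with h | h
        · exact h
        · exfalso
          have hcc : b.support.card = 0 := by omega
          exact h0 (Finsupp.support_eq_empty.1 (Finset.card_eq_zero.1 hcc))
      obtain ⟨u, hu, v, hv, huv⟩ := Finset.one_lt_card.1 h2
      -- build b' ∈ K with smaller support containing some element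
      have key : ∃ b' : ASp m n, b' ∈ K ∧ b'.support ⊂ b.support ∧ b' ≠ 0 := by
        by_cases hα : u.1 = v.1
        · -- second components differ
          have h2ne : u.2 ≠ v.2 := by
            intro h; exact huv (Prod.ext hα h)
          have : ∃ (j : Fin n) (kp dr : AIdx m n), kp ∈ b.support ∧ dr ∈ b.support ∧
              j ∈ kp.2 ∧ j ∉ dr.2 := by
            by_cases hsub : u.2 ⊆ v.2
            · have : ¬ v.2 ⊆ u.2 := fun h => h2ne (Finset.Subset.antisymm hsub h)
              obtain ⟨j, hj1, hj2⟩ := Finset.not_subset.1 this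
              exact ⟨j, v, u, hv, hu, hj1, hj2⟩
            · obtain ⟨j, hj1, hj2⟩ := Finset.not_subset.1 hsub
              exact ⟨j, u, v, hu, hv, hj1, hj2⟩
          obtain ⟨j, kp, dr, hkp, hdr, hjk, hjd⟩ := this
          refine ⟨mulA m n (Finsupp.single ((0 : Fin m → ℤ), ({j} : Finset (Fin n))) 1)
              (xiOpA m n j b), hm _ _ (hxi _ _ hK), ?_, ?_⟩
          · constructor
            · intro w hw
              have := Finsupp.mem_support_iff.1 hw
              rw [pin_apply] at this
              by_cases hjw : j ∈ w.2
              · rw [if_pos hjw] at this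
                exact Finsupp.mem_support_iff.2 this
              · simp [hjw] at this
            · intro hss
              have := hss hdr
              have h3 := Finsupp.mem_support_iff.1 this
              rw [pin_apply, if_neg hjd] at h3
              exact h3 rfl
          · intro h
            have h3 := Finsupp.mem_support_iff.1 hkp
            apply h3
            have := congrArg (fun f : ASp m n => f kp) h
            simpa [pin_apply, hjk] using this
        · -- first components differ at some i
          have : ∃ i : Fin m, u.1 i ≠ v.1 i := by
            by_contra hc
            push_neg at hc
            exact hα (funext hc)
          obtain ⟨i, hi⟩ := this
          refine ⟨dOpA m n i b - (v.1 i : ℂ) • b, K.sub_mem (hd _ _ hK) (K.smul_mem _ hK),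
            ?_, ?_⟩
          · have hval : ∀ w : AIdx m n,
                (dOpA m n i b - (v.1 i : ℂ) • b) w = ((w.1 i : ℂ) - (v.1 i : ℂ)) * b w := by
              intro w
              rw [Finsupp.sub_apply, Finsupp.smul_apply, dOpA_apply, smul_eq_mul]
              ring
            constructor
            · intro w hw
              have := Finsupp.mem_support_iff.1 hw
              rw [hval] at this
              exact Finsupp.mem_support_iff.2 fun h => this (by rw [h, mul_zero])
            · intro hss
              have h3 := Finsupp.mem_support_iff.1 (hss hv)
              rw [hval] at h3
              simp at h3
          · intro h
            have h3 := Finsupp.mem_support_iff.1 hu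
            apply h3
            have := congrArg (fun f : ASp m n => f u) h
            simp only [Finsupp.sub_apply, Finsupp.smul_apply, dOpA_apply, Finsupp.coe_zero,
              Pi.zero_apply, smul_eq_mul] at this
            have h4 : ((u.1 i : ℂ) - (v.1 i : ℂ)) * b u = 0 := by linear_combination this
            rcases mul_eq_zero.1 h4 with h5 | h5
            · exfalso
              apply hi
              have := sub_eq_zero.1 h5
              exact_mod_cast this
            · exact h5
      obtain ⟨b', hK', hss, h0'⟩ := key
      have hlt := Finset.card_lt_card hss
      exact ih b' (by omega) hK' h0'

lemma strip_xi {m n : ℕ} (K : Submodule ℂ (ASp m n))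
    (hxi : ∀ (j : Fin n) (b : ASp m n), b ∈ K → xiOpA m n j b ∈ K) :
    ∀ (N : ℕ) (α : Fin m → ℤ) (I : Finset (Fin n)), I.card ≤ N →
      Finsupp.single (α, I) 1 ∈ K → Finsupp.single (α, (∅ : Finset (Fin n))) 1 ∈ K := by
  intro N
  induction N with
  | zero =>
    intro α I hc hK
    rw [Finset.card_eq_zero.1 (Nat.le_zero.1 hc)] at hK
    exact hK
  | succ N ih =>
    intro α I hc hK
    rcases Finset.eq_empty_or_nonempty I with rfl | ⟨j, hj⟩
    · exact hK
    · have h1 := hxi j _ hK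
      rw [xiOpA_single] at h1
      simp only [hj, if_pos] at h1
      have h2 : Finsupp.single (α, I.erase j) 1 ∈ K := by
        have := K.smul_mem ((-1 : ℂ) ^ ((I.filter (· < j)).card)) h1
        rwa [smul_smul, ← pow_add, ← two_mul, pow_mul, neg_one_sq, one_pow, one_smul] at this
      have h3 : (I.erase j).card ≤ N := by
        have := Finset.card_erase_of_mem hj
        omega
      exact ih α _ h3 h2

lemma ker_trivial {m n : ℕ} (K : Submodule ℂ (ASp m n))
    (hd : ∀ (i : Fin m) (b : ASp m n), b ∈ K → dOpA m n i b ∈ K)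
    (hxi : ∀ (j : Fin n) (b : ASp m n), b ∈ K → xiOpA m n j b ∈ K)
    (hm : ∀ (a b : ASp m n), b ∈ K → mulA m n a b ∈ K)
    (hne : Finsupp.single ((0 : Fin m → ℤ), (∅ : Finset (Fin n))) 1 ∉ K) :
    K = ⊥ := by
  by_contra h
  obtain ⟨b, hbK, hb0⟩ := Submodule.exists_mem_ne_zero_of_ne_bot h
  obtain ⟨⟨α, I⟩, hu⟩ := single_mem_of_mem K hd hxi hm b.support.card b le_rfl hbK hb0
  have h1 : Finsupp.single (α, (∅ : Finset (Fin n))) 1 ∈ K :=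
    strip_xi K hxi I.card α I le_rfl hu
  have h2 := hm (Finsupp.single (-α, (∅ : Finset (Fin n))) 1) _ h1
  rw [mulA_t_single] at h2
  simp only [neg_add_cancel] at h2
  exact hne h2

lemma zmod2_cases (x : ZMod 2) : x = 0 ∨ x = 1 := by
  fin_cases x
  · exact Or.inl rfl
  · exact Or.inr rfl

lemma single_mem_apar {m n : ℕ} (u : AIdx m n) (c : ℂ) :
    Finsupp.single u c ∈ Apar m n (u.2.card : ZMod 2) := by
  have h1 : (Finsupp.single u 1 : ASp m n) ∈ Apar m n (u.2.card : ZMod 2) :=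
    Submodule.subset_span ⟨u, rfl, rfl⟩
  have : (Finsupp.single u c : ASp m n) = c • Finsupp.single u 1 := by
    rw [Finsupp.smul_single, smul_eq_mul, mul_one]
  rw [this]
  exact Submodule.smul_mem _ _ h1

lemma mem_apar_sup {m n : ℕ} (b : ASp m n) : b ∈ Apar m n 0 ⊔ Apar m n 1 := by
  induction b using Finsupp.induction_linear with
  | zero => exact Submodule.zero_mem _
  | add f g hf hg => exact Submodule.add_mem _ hf hg
  | single u c =>
    rcases zmod2_cases (u.2.card : ZMod 2) with h | h
    · exact Submodule.mem_sup_left (h ▸ single_mem_apar u c)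
    · exact Submodule.mem_sup_right (h ▸ single_mem_apar u c)

lemma exists_vacuum {m n : ℕ} {V : Type*} [AddCommGroup V] [Module ℂ V]
    (gV : ZMod 2 → Submodule ℂ V)
    (D : Fin m → Module.End ℂ V) (X : Fin n → Module.End ℂ V)
    (hDX : ∀ (i : Fin m) (j : Fin n), D i * X j = X j * D i)
    (hXX : ∀ j j' : Fin n, X j * X j' + X j' * X j = 0)
    (hpX : ∀ (j : Fin n) (q : ZMod 2), ∀ v ∈ gV q, X j v ∈ gV (q + 1))
    (μ : Fin m → ℂ) :
    ∀ (N : ℕ) (S : Finset (Fin n)) (q : ZMod 2) (w : V), S.card ≤ N → w ≠ 0 → w ∈ gV q →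
      (∀ i, D i w = μ i • w) → (∀ j, j ∉ S → X j w = 0) →
      ∃ (p : ZMod 2) (v : V), v ≠ 0 ∧ v ∈ gV p ∧ (∀ i, D i v = μ i • v) ∧ ∀ j, X j v = 0 := by
  have hXsq : ∀ j : Fin n, X j * X j = 0 := by
    intro j
    have := hXX j j
    have h2 : (2 : ℂ) • (X j * X j) = 0 := by
      rw [two_smul]; exact this
    have := smul_eq_zero.1 h2
    simpa using this
  intro N
  induction N with
  | zero =>
    intro S q w hc hw0 hwm hwD hS
    refine ⟨q, w, hw0, hwm, hwD, fun j => hS j ?_⟩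
    rw [Finset.card_eq_zero.1 (Nat.le_zero.1 hc)]
    exact Finset.notMem_empty j
  | succ N ih =>
    intro S q w hc hw0 hwm hwD hS
    by_cases hall : ∀ j, X j w = 0
    · exact ⟨q, w, hw0, hwm, hwD, hall⟩
    · push_neg at hall
      obtain ⟨j₀, hj₀⟩ := hall
      have hj₀S : j₀ ∈ S := by
        by_contra h
        exact hj₀ (hS j₀ h)
      refine ih (S.erase j₀) (q + 1) (X j₀ w) ?_ hj₀ (hpX j₀ q w hwm) ?_ ?_
      · have := Finset.card_erase_of_mem hj₀S
        omega
      · intro i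
        have h1 : D i (X j₀ w) = (D i * X j₀) w := rfl
        rw [h1, hDX, Module.End.mul_apply, hwD, map_smul]
      · intro j hj
        rcases eq_or_ne j j₀ with rfl | hne
        · have : X j (X j w) = (X j * X j) w := rfl
          rw [this, hXsq]
          rfl
        · have hjS : j ∉ S := by
            intro h
            exact hj (Finset.mem_erase.2 ⟨hne, h⟩)
          have h1 : X j (X j₀ w) = (X j * X j₀) w := rfl
          have h2 : X j * X j₀ = - (X j₀ * X j) := by
            have := hXX j j₀
            rw [eq_neg_iff_add_eq_zero]
            exact this
          rw [h1, h2]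
          simp [Module.End.mul_apply, hS j hjS]

/-- Every simple weight module over the Weyl superalgebra `K_{m,n}` is isomorphic,
up to a parity change, to `A(λ)` for some `λ ∈ ℂ^m`.  A `K_{m,n}`-module is a
`ℤ₂`-graded space `V` with a unital associative action `am` of `A_{m,n}`, and even
operators `D i` and odd operators `X j` satisfying the defining (super)relations of
`K_{m,n}`; it is a weight module when `D 1, …, D m` act simultaneously diagonalizably,
and simple when it is nonzero with no proper nonzero graded invariant subspace. -/
theorem stmt13 (m n : ℕ) (V : Type*) [AddCommGroup V] [Module ℂ V] [Nontrivial V]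
    (gV : ZMod 2 → Submodule ℂ V) (hcompl : IsCompl (gV 0) (gV 1))
    (am : ASp m n →ₗ[ℂ] Module.End ℂ V)
    (D : Fin m → Module.End ℂ V) (X : Fin n → Module.End ℂ V)
    (hone : am (Finsupp.single (0, ∅) 1) = 1)
    (hmul : ∀ a b : ASp m n, am (mulA m n a b) = am a * am b)
    (hD : ∀ (i : Fin m) (a : ASp m n), D i * am a - am a * D i = am (dOpA m n i a))
    (hX : ∀ (j : Fin n) (u : AIdx m n),
      X j * am (Finsupp.single u 1)
          - ((-1 : ℂ) ^ u.2.card) • (am (Finsupp.single u 1) * X j)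
        = am (xiOpA m n j (Finsupp.single u 1)))
    (hDD : ∀ i i' : Fin m, D i * D i' = D i' * D i)
    (hDX : ∀ (i : Fin m) (j : Fin n), D i * X j = X j * D i)
    (hXX : ∀ j j' : Fin n, X j * X j' + X j' * X j = 0)
    (hpA : ∀ (u : AIdx m n) (q : ZMod 2), ∀ v ∈ gV q,
      am (Finsupp.single u 1) v ∈ gV (q + (u.2.card : ZMod 2)))
    (hpD : ∀ (i : Fin m) (q : ZMod 2), ∀ v ∈ gV q, D i v ∈ gV q)
    (hpX : ∀ (j : Fin n) (q : ZMod 2), ∀ v ∈ gV q, X j v ∈ gV (q + 1))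
    (hwt : (⨆ μ : Fin m → ℂ, ⨅ i : Fin m, Module.End.eigenspace (D i) (μ i)) = ⊤)
    (hsimp : ∀ P : Submodule ℂ V, P = (P ⊓ gV 0) ⊔ (P ⊓ gV 1) →
      (∀ a : ASp m n, ∀ v ∈ P, am a v ∈ P) →
      (∀ i : Fin m, ∀ v ∈ P, D i v ∈ P) →
      (∀ j : Fin n, ∀ v ∈ P, X j v ∈ P) →
      P = ⊥ ∨ P = ⊤) :
    ∃ (lam : Fin m → ℂ) (par : ZMod 2) (e : V ≃ₗ[ℂ] ASp m n),
      (∀ (a : ASp m n) (v : V), e (am a v) = mulA m n a (e v)) ∧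
      (∀ (i : Fin m) (v : V), e (D i v) = dOpA m n i (e v) + lam i • e v) ∧
      (∀ (j : Fin n) (v : V), e (X j v) = xiOpA m n j (e v)) ∧
      (∀ q : ZMod 2, ∀ v ∈ gV q, e v ∈ Apar m n (q + par)) := by
  classical
  -- Step 1: a nonzero simultaneous eigenvector
  have hμex : ∃ μ : Fin m → ℂ, (⨅ i, Module.End.eigenspace (D i) (μ i)) ≠ ⊥ := by
    by_contra h
    push_neg at h
    rw [iSup_eq_bot.2 h] at hwt
    exact bot_ne_top hwt
  obtain ⟨μ, hμ⟩ := hμex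
  obtain ⟨w, hwmem, hwne⟩ := Submodule.exists_mem_ne_zero_of_ne_bot hμ
  have hwD : ∀ i, D i w = μ i • w := fun i =>
    Module.End.mem_eigenspace_iff.1 ((Submodule.mem_iInf _).1 hwmem i)
  -- Step 2: a nonzero homogeneous weight vector
  have hsupw : w ∈ gV 0 ⊔ gV 1 := by rw [hcompl.codisjoint.eq_top]; trivial
  obtain ⟨w0, hw0m, w1, hw1m, hw01⟩ := Submodule.mem_sup.1 hsupw
  have hbot : gV 0 ⊓ gV 1 = ⊥ := hcompl.disjoint.eq_bot
  have hcomp : ∀ i, D i w0 = μ i • w0 ∧ D i w1 = μ i • w1 := by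
    intro i
    have e1 : D i w0 + D i w1 = μ i • w0 + μ i • w1 := by
      have h1 := hwD i
      rw [← hw01, map_add, smul_add] at h1
      exact h1
    have e2 : D i w0 - μ i • w0 = μ i • w1 - D i w1 := by
      rw [sub_eq_sub_iff_add_eq_add]
      rw [e1]
      abel
    have m1 : D i w0 - μ i • w0 ∈ gV 0 :=
      sub_mem (hpD i 0 w0 hw0m) (Submodule.smul_mem _ _ hw0m)
    have m2 : D i w0 - μ i • w0 ∈ gV 1 := by
      rw [e2]
      exact sub_mem (Submodule.smul_mem _ _ hw1m) (hpD i 1 w1 hw1m)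
    have hz : D i w0 - μ i • w0 = 0 := by
      have := Submodule.mem_inf.2 ⟨m1, m2⟩
      rw [hbot] at this
      simpa using this
    refine ⟨sub_eq_zero.1 hz, ?_⟩
    have := e2.symm.trans hz
    have := sub_eq_zero.1 this
    exact this.symm
  have hpick : ∃ (q : ZMod 2) (wq : V), wq ≠ 0 ∧ wq ∈ gV q ∧ ∀ i, D i wq = μ i • wq := by
    by_cases h : w0 = 0
    · refine ⟨1, w1, ?_, hw1m, fun i => (hcomp i).2⟩
      intro hz
      apply hwne
      rw [← hw01, h, hz, add_zero]
    · exact ⟨0, w0, h, hw0m, fun i => (hcomp i).1⟩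
  obtain ⟨q₀, wq, hq0, hqm, hqD⟩ := hpick
  -- Step 3: a vacuum vector killed by all X j
  obtain ⟨p, v₀, hv0, hvm, hvD, hvX⟩ :=
    exists_vacuum gV D X hDX hXX hpX μ Finset.univ.card Finset.univ q₀ wq le_rfl hq0 hqm hqD
      (fun j hj => absurd (Finset.mem_univ j) hj)
  -- Step 4: the evaluation map φ
  let φ : ASp m n →ₗ[ℂ] V :=
    { toFun := fun a => am a v₀
      map_add' := fun a b => by
        show am (a + b) v₀ = am a v₀ + am b v₀
        rw [map_add]; rfl
      map_smul' := fun c a => by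
        show am (c • a) v₀ = c • am a v₀
        rw [map_smul]; rfl }
  have hφ : ∀ a, φ a = am a v₀ := fun a => rfl
  have R1 : ∀ a b, φ (mulA m n a b) = am a (φ b) := by
    intro a b
    rw [hφ, hmul]
    rfl
  have R2 : ∀ i b, D i (φ b) = μ i • φ b + φ (dOpA m n i b) := by
    intro i b
    have h2 := congrArg (fun f : Module.End ℂ V => f v₀) (hD i b)
    simp only [LinearMap.sub_apply, Module.End.mul_apply] at h2
    rw [hvD i, map_smul] at h2
    show D i (am b v₀) = μ i • (am b v₀) + am (dOpA m n i b) v₀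
    rw [← h2]
    abel
  have R3 : ∀ j b, X j (φ b) = φ (xiOpA m n j b) := by
    intro j b
    induction b using Finsupp.induction_linear with
    | zero => simp
    | add f g hf hg => simp only [map_add, hf, hg]
    | single u c =>
      have hbase : X j (φ (Finsupp.single u 1)) = φ (xiOpA m n j (Finsupp.single u 1)) := by
        have h2 := congrArg (fun f : Module.End ℂ V => f v₀) (hX j u)
        simp only [LinearMap.sub_apply, LinearMap.smul_apply, Module.End.mul_apply] at h2
        rw [hvX j, map_zero, smul_zero, sub_zero] at h2
        exact h2
      have hc : (Finsupp.single u c : ASp m n) = c • Finsupp.single u 1 := by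
        rw [Finsupp.smul_single, smul_eq_mul, mul_one]
      rw [hc, map_smul, map_smul, map_smul, map_smul, hbase]
  have hv₀φ : φ (Finsupp.single ((0 : Fin m → ℤ), (∅ : Finset (Fin n))) 1) = v₀ := by
    rw [hφ, hone]
    rfl
  -- parity of φ
  have hφpar : ∀ (r : ZMod 2) (b : ASp m n), b ∈ Apar m n r → φ b ∈ gV (p + r) := by
    intro r
    have hle : Apar m n r ≤ Submodule.comap φ (gV (p + r)) := by
      rw [Apar]
      apply Submodule.span_le.2
      rintro a ⟨u, hcard, rfl⟩
      simp only [SetLike.mem_coe, Submodule.mem_comap]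
      rw [hφ, ← hcard]
      exact hpA u p v₀ hvm
    intro b hb
    exact hle hb
  -- Step 5: surjectivity
  have hrange : LinearMap.range φ = (LinearMap.range φ ⊓ gV 0) ⊔ (LinearMap.range φ ⊓ gV 1) := by
    apply le_antisymm
    · rintro v ⟨b, rfl⟩
      obtain ⟨b0, hb0, b1, hb1, hb⟩ := Submodule.mem_sup.1 (mem_apar_sup b)
      rw [← hb, map_add]
      have h0 : φ b0 ∈ gV p := by
        have := hφpar 0 b0 hb0
        rwa [add_zero] at this
      have h1 : φ b1 ∈ gV (p + 1) := hφpar 1 b1 hb1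
      have hr0 : φ b0 ∈ LinearMap.range φ := ⟨b0, rfl⟩
      have hr1 : φ b1 ∈ LinearMap.range φ := ⟨b1, rfl⟩
      rcases zmod2_cases p with hp | hp <;> rw [hp] at h0 h1
      · rw [show (0 : ZMod 2) + 1 = 1 by decide] at h1
        exact Submodule.add_mem _ (Submodule.mem_sup_left (Submodule.mem_inf.2 ⟨hr0, h0⟩))
          (Submodule.mem_sup_right (Submodule.mem_inf.2 ⟨hr1, h1⟩))
      · rw [show (1 : ZMod 2) + 1 = 0 by decide] at h1
        exact Submodule.add_mem _ (Submodule.mem_sup_right (Submodule.mem_inf.2 ⟨hr0, h0⟩))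
          (Submodule.mem_sup_left (Submodule.mem_inf.2 ⟨hr1, h1⟩))
    · exact sup_le inf_le_left inf_le_left
  have hsurj : Function.Surjective φ := by
    have hP := hsimp (LinearMap.range φ) hrange
      (by rintro a v ⟨b, rfl⟩; exact ⟨mulA m n a b, R1 a b⟩)
      (by
        rintro i v ⟨b, rfl⟩
        refine ⟨μ i • b + dOpA m n i b, ?_⟩
        rw [map_add, map_smul, R2])
      (by rintro j v ⟨b, rfl⟩; exact ⟨xiOpA m n j b, (R3 j b).symm⟩)
    rcases hP with h | h
    · exfalso
      apply hv0
      have hv : v₀ ∈ LinearMap.range φ := ⟨_, hv₀φ⟩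
      rw [h] at hv
      simpa using hv
    · intro v
      have : v ∈ LinearMap.range φ := by rw [h]; trivial
      exact this
  -- Step 6: injectivity
  have hker : LinearMap.ker φ = ⊥ := by
    apply ker_trivial
    · intro i b hb
      rw [LinearMap.mem_ker] at hb ⊢
      have := R2 i b
      rw [hb, map_zero, smul_zero, zero_add] at this
      exact this.symm
    · intro j b hb
      rw [LinearMap.mem_ker] at hb ⊢
      rw [← R3, hb, map_zero]
    · intro a b hb
      rw [LinearMap.mem_ker] at hb ⊢
      rw [R1, hb, map_zero]
    · intro h
      rw [LinearMap.mem_ker, hv₀φ] at h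
      exact hv0 h
  have hinj : Function.Injective φ := LinearMap.ker_eq_bot.1 hker
  -- Step 7: the equivalence
  let E := LinearEquiv.ofBijective φ ⟨hinj, hsurj⟩
  let e : V ≃ₗ[ℂ] ASp m n := E.symm
  have hEφ : ∀ b, E b = φ b := fun b => rfl
  have hφe : ∀ v, φ (e v) = v := by
    intro v
    have := E.apply_symm_apply v
    rw [← hEφ]
    exact this
  have heq : ∀ (x : V) (y : ASp m n), φ y = x → e x = y := by
    intro x y h
    apply hinj
    rw [hφe, h]
  refine ⟨μ, p, e, ?_, ?_, ?_, ?_⟩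
  · intro a v
    apply heq
    rw [R1, hφe]
  · intro i v
    apply heq
    have hR := R2 i (e v)
    rw [hφe] at hR
    rw [map_add, map_smul, hφe, hR]
    abel
  · intro j v
    apply heq
    rw [← R3, hφe]
  · intro q v hq
    have hzero : ∀ b' : ASp m n, φ b' ∈ gV 0 → φ b' ∈ gV 1 → b' = 0 := by
      intro b' h0 h1
      have hmem : φ b' ∈ gV 0 ⊓ gV 1 := Submodule.mem_inf.2 ⟨h0, h1⟩
      rw [hbot] at hmem
      apply hinj
      rw [map_zero]
      simpa using hmem
    obtain ⟨b0, hb0, b1, hb1, hb⟩ := Submodule.mem_sup.1 (mem_apar_sup (e v))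
    have h0 : φ b0 ∈ gV p := by
      have := hφpar 0 b0 hb0
      rwa [add_zero] at this
    have h1 : φ b1 ∈ gV (p + 1) := hφpar 1 b1 hb1
    have hv' : φ b0 + φ b1 = v := by
      rw [← map_add, hb, hφe]
    rcases zmod2_cases p with hp | hp <;> rcases zmod2_cases q with hq' | hq' <;>
        subst hp <;> subst hq'
    · -- p = 0, q = 0 : b1 = 0
      rw [show (0 : ZMod 2) + 1 = 1 by decide] at h1
      have hz : b1 = 0 := by
        apply hzero b1 _ h1
        have : φ b1 = v - φ b0 := by rw [← hv']; abel
        rw [this]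
        exact sub_mem hq h0
      rw [← hb, hz]
      simpa using hb0
    · -- p = 0, q = 1 : b0 = 0
      rw [show (0 : ZMod 2) + 1 = 1 by decide] at h1
      have hz : b0 = 0 := by
        apply hzero b0 h0
        have : φ b0 = v - φ b1 := by rw [← hv']; abel
        rw [this]
        exact sub_mem hq h1
      rw [← hb, hz, zero_add, show (1 : ZMod 2) + 0 = 1 by decide]
      exact hb1
    · -- p = 1, q = 0 : b0 = 0
      rw [show (1 : ZMod 2) + 1 = 0 by decide] at h1
      have hz : b0 = 0 := by
        apply hzero b0 _ h0
        have : φ b0 = v - φ b1 := by rw [← hv']; abel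
        rw [this]
        exact sub_mem hq h1
      rw [← hb, hz]
      simpa using hb1
    · -- p = 1, q = 1 : b1 = 0
      rw [show (1 : ZMod 2) + 1 = 0 by decide] at h1
      have hz : b1 = 0 := by
        apply hzero b1 h1
        have : φ b1 = v - φ b0 := by rw [← hv']; abel
        rw [this]
        exact sub_mem hq h0
      rw [← hb, hz, add_zero, show (1 : ZMod 2) + 1 = 0 by decide]
      exact hb0
end

section
/- Let W = W_{m,n} with m > 1, and suppose M is a simple weight W-module, v ∈ M is a nonzero vector, and α ∈ ℕ^m (all coordinates positive). If W_{-α}·v = 0 and additionally there exists N ∈ ℕ with W_{e_i + Nα}·v = 0 for i = 1,...,m, then W·v = 0, i.e., v spans a trivial submodule; consequently if M is simple and not one-dimensional-trivial, then W_{-α}v ≠ 0 for every nonzero v ∈ M satisfying the vanishing hypothesis on W_{e_i+Nα}. -/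
lemma bracketW_single {m n : ℕ} (u w : WIdx m n) :
    bracketW m n (Finsupp.single u 1) (Finsupp.single w 1) = bracketMono u w := by
  simp [bracketW, Finsupp.lsum_single, LinearMap.toSpanSingleton_apply]

lemma kb1 {m n : ℕ} (μ β : Fin m → ℤ) (i j : Fin m) (J : Finset (Fin n)) :
    bracketMono ((μ, ∅, Sum.inl i) : WIdx m n) (β, J, Sum.inl j) =
      (β i : ℂ) • Finsupp.single (μ + β, J, Sum.inl j) 1 -
      (μ j : ℂ) • Finsupp.single (μ + β, J, Sum.inl i) 1 := by
  simp [bracketMono, derMono, dCoeff, dSet, mulMono, epsF, tauF, attachD, parWIdx,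
    Finsupp.mapDomain_single, Finsupp.mapDomain_smul, add_comm β μ]

lemma kb2 {m n : ℕ} (μ β : Fin m → ℤ) (i : Fin m) (j : Fin n) (J : Finset (Fin n)) :
    bracketMono ((μ, ∅, Sum.inl i) : WIdx m n) (β, J, Sum.inr j) =
      (β i : ℂ) • Finsupp.single (μ + β, J, Sum.inr j) 1 := by
  simp [bracketMono, derMono, dCoeff, dSet, mulMono, epsF, tauF, attachD, parWIdx,
    Finsupp.mapDomain_single, Finsupp.mapDomain_smul, add_comm β μ]

/-- Let `W = W_{m,n}` with `m > 1`, let `M` be a module over the Lie superalgebra `W`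
and `v ∈ M`, and let `α ∈ ℕ^m` (all coordinates positive).  If `W_{-α} · v = 0` and
there is `N ∈ ℕ` with `W_{e_i + Nα} · v = 0` for `i = 1, …, m`, then `W · v = 0`,
i.e. `v` spans a trivial submodule.  Consequently, if `M` is simple (no nontrivial
graded invariant subspace), `v` is homogeneous, and the action of `W` on `M` is
nontrivial, then `v = 0`; in particular `W_{-α} v ≠ 0` for every nonzero homogeneous
`v` satisfying the vanishing hypothesis on the `W_{e_i + Nα}`. -/
theorem stmt19 (m n : ℕ) (hm : 1 < m) (V : Type*) [AddCommGroup V] [Module ℂ V]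
    (gV : ZMod 2 → Submodule ℂ V) (hcompl : IsCompl (gV 0) (gV 1))
    (ρ : WSp m n →ₗ[ℂ] Module.End ℂ V)
    (hpar : ∀ (p : ℕ) (x : WSp m n), x ∈ Wpar m n p →
      ∀ q : ZMod 2, ∀ v ∈ gV q, ρ x v ∈ gV (q + (p : ZMod 2)))
    (hrep : ∀ (p q : ℕ) (x y : WSp m n), x ∈ Wpar m n p → y ∈ Wpar m n q →
      ρ (bracketW m n x y) = ρ x * ρ y - ((-1 : ℂ) ^ (p * q)) • (ρ y * ρ x))
    (α : Fin m → ℤ) (hα : ∀ i, 0 < α i) (v : V)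
    (h1 : ∀ x ∈ Wgr m n (-α), ρ x v = 0)
    (N : ℕ)
    (h2 : ∀ i : Fin m, ∀ x ∈ Wgr m n (Pi.single i 1 + (N : ℤ) • α), ρ x v = 0) :
    (∀ x : WSp m n, ρ x v = 0) ∧
    ((∀ P : Submodule ℂ V, P = (P ⊓ gV 0) ⊔ (P ⊓ gV 1) →
        (∀ x : WSp m n, ∀ u ∈ P, ρ x u ∈ P) → P = ⊥ ∨ P = ⊤) →
      (∃ p : ZMod 2, v ∈ gV p) →
      (∃ (x : WSp m n) (u : V), ρ x u ≠ 0) →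
      v = 0) := by
  have hnt : Nontrivial (Fin m) := Fin.nontrivial_iff_two_le.mpr hm
  -- `good γ` : the whole graded component of degree γ annihilates v
  set good : (Fin m → ℤ) → Prop :=
    fun γ => ∀ (I : Finset (Fin n)) (cc : Fin m ⊕ Fin n),
      ρ (Finsupp.single (γ, I, cc) 1) v = 0 with hgood_def
  -- brackets of annihilating basis elements annihilate
  have hbr : ∀ u w : WIdx m n, ρ (Finsupp.single u 1) v = 0 →
      ρ (Finsupp.single w 1) v = 0 → ρ (bracketMono u w) v = 0 := by
    intro u w hu hw
    have hu' : (Finsupp.single u 1 : WSp m n) ∈ Wpar m n (parWIdx u) :=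
      Submodule.subset_span ⟨u, rfl, rfl⟩
    have hw' : (Finsupp.single w 1 : WSp m n) ∈ Wpar m n (parWIdx w) :=
      Submodule.subset_span ⟨w, rfl, rfl⟩
    have := hrep (parWIdx u) (parWIdx w) _ _ hu' hw'
    rw [bracketW_single] at this
    rw [this]
    simp [LinearMap.sub_apply, Module.End.mul_apply, hu, hw]
  -- the key step lemma
  have hST : ∀ μ β : Fin m → ℤ, good μ → good β → μ ≠ β → good (μ + β) := by
    intro μ β hμ hβ hne I cc
    obtain ⟨i₀, hi₀⟩ := Function.ne_iff.mp hne
    have hi₀C : (μ i₀ : ℂ) ≠ (β i₀ : ℂ) := by exact_mod_cast fun h => hi₀ (by exact_mod_cast h)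
    have hX : ∀ k : Fin m, ρ (Finsupp.single (μ + β, I, Sum.inl k) 1) v = 0 →
        True := fun _ _ => trivial
    -- X i₀ = 0
    have hXi₀ : ρ (Finsupp.single (μ + β, I, Sum.inl i₀) 1) v = 0 := by
      have h := hbr (μ, ∅, Sum.inl i₀) (β, I, Sum.inl i₀) (hμ ∅ _) (hβ I _)
      rw [kb1] at h
      rw [map_sub, map_smul, map_smul] at h
      simp only [LinearMap.sub_apply, LinearMap.smul_apply] at h
      have h' : ((β i₀ : ℂ) - (μ i₀ : ℂ)) • ρ (Finsupp.single (μ + β, I, Sum.inl i₀) 1) v = 0 := by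
        rw [sub_smul]; exact h
      rcases smul_eq_zero.mp h' with h'' | h''
      · exact absurd (sub_eq_zero.mp h'').symm hi₀C
      · exact h''
    rcases eq_or_ne (β i₀ : ℂ) 0 with hb0 | hb0
    · -- then μ i₀ ≠ 0 ; use the swapped relations
      have hm0 : (μ i₀ : ℂ) ≠ 0 := by rw [hb0] at hi₀C; exact hi₀C
      rcases cc with j | j
      · have h := hbr (β, ∅, Sum.inl i₀) (μ, I, Sum.inl j) (hβ ∅ _) (hμ I _)
        rw [kb1, add_comm β μ] at h
        rw [map_sub, map_smul, map_smul] at h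
        simp only [LinearMap.sub_apply, LinearMap.smul_apply] at h
        rw [hXi₀, smul_zero, sub_zero] at h
        exact (smul_eq_zero.mp h).resolve_left hm0
      · have h := hbr (β, ∅, Sum.inl i₀) (μ, I, Sum.inr j) (hβ ∅ _) (hμ I _)
        rw [kb2, add_comm β μ] at h
        rw [map_smul] at h
        simp only [LinearMap.smul_apply] at h
        exact (smul_eq_zero.mp h).resolve_left hm0
    · rcases cc with j | j
      · have h := hbr (μ, ∅, Sum.inl i₀) (β, I, Sum.inl j) (hμ ∅ _) (hβ I _)
        rw [kb1] at h
        rw [map_sub, map_smul, map_smul] at h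
        simp only [LinearMap.sub_apply, LinearMap.smul_apply] at h
        rw [hXi₀, smul_zero, sub_zero] at h
        exact (smul_eq_zero.mp h).resolve_left hb0
      · have h := hbr (μ, ∅, Sum.inl i₀) (β, I, Sum.inr j) (hμ ∅ _) (hβ I _)
        rw [kb2] at h
        rw [map_smul] at h
        simp only [LinearMap.smul_apply] at h
        exact (smul_eq_zero.mp h).resolve_left hb0
  -- degree components that annihilate v, from the hypotheses
  have hNeg : good (-α) := fun I cc => h1 _ (Submodule.subset_span ⟨I, cc, rfl⟩)
  have hGen : ∀ i : Fin m, good (Pi.single i 1 + (N : ℤ) • α) :=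
    fun i I cc => h2 i _ (Submodule.subset_span ⟨I, cc, rfl⟩)
  -- the family e_p + k α for all k ≤ N
  have hL1 : ∀ p : Fin m, ∀ k : ℤ, k ≤ (N : ℤ) → good (Pi.single p 1 + k • α) := by
    intro p
    refine Int.le_induction_down (hGen p) ?_
    intro k hk IH
    have hne : (Pi.single p 1 + k • α : Fin m → ℤ) ≠ -α := by
      intro h
      obtain ⟨j, hj⟩ := exists_ne p
      have h1' := congrFun h j
      have h2' := congrFun h p
      simp [Pi.single_apply, hj, smul_eq_mul] at h1' h2'
      have hja : (k + 1) * α j = 0 := by ring_nf; ring_nf at h1'; linarith [h1']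
      rcases mul_eq_zero.mp hja with hk1 | hz
      · have hkm : k = -1 := by linarith
        rw [hkm] at h2'; linarith
      · exact absurd hz (hα j).ne'
    have h := hST _ _ IH hNeg hne
    have he : (Pi.single p 1 + k • α) + (-α) = (Pi.single p 1 + (k - 1) • α : Fin m → ℤ) := by
      funext j; simp [sub_smul]; ring
    rwa [he] at h
  -- a nonneg function summing to 1 is an indicator
  have hsingle : ∀ c : Fin m → ℕ, (∑ j, c j) = 1 →
      ∃ q, c = fun j => if j = q then 1 else 0 := by
    intro c hc
    have hex : ∃ q, 0 < c q := by
      by_contra hno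
      push_neg at hno
      simp only [Nat.le_zero] at hno
      rw [Finset.sum_eq_zero (fun j _ => hno j)] at hc
      omega
    obtain ⟨q, hq⟩ := hex
    refine ⟨q, funext fun j => ?_⟩
    rcases eq_or_ne j q with rfl | hne
    · have hle : c j ≤ 1 :=
        hc ▸ Finset.single_le_sum (fun _ _ => Nat.zero_le _) (Finset.mem_univ j)
      simp; omega
    · have hle : c j + c q ≤ ∑ i, c i := by
        rw [← Finset.sum_pair hne]
        exact Finset.sum_le_sum_of_subset (Finset.subset_univ _)
      simp [hne]; omega
  -- main generation lemma
  have hNC : ∀ s : ℕ, ∀ c : Fin m → ℕ,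
      (∃ a b, a ≠ b ∧ 0 < c a ∧ 0 < c b) → (∑ j, c j) = s →
      ∀ K : ℤ, K ≤ (s : ℤ) * N → good (fun j => (c j : ℤ) + K * α j) := by
    intro s
    induction s using Nat.strong_induction_on with
    | _ s IH =>
    rintro c ⟨a, b, hab, ha, hb⟩ hs K hK
    have hs2 : 2 ≤ s := by
      have hle : c a + c b ≤ ∑ i, c i := by
        rw [← Finset.sum_pair hab]
        exact Finset.sum_le_sum_of_subset (Finset.subset_univ _)
      omega
    -- choose the coordinate p to peel, with witnesses
    obtain ⟨p, hp, q, hqp, hq, hsplit⟩ :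
        ∃ p, 0 < c p ∧ ∃ q, q ≠ p ∧ 0 < c q ∧
          (s = 2 ∨ ∃ x y, x ≠ y ∧
            0 < c x - (if x = p then 1 else 0) ∧ 0 < c y - (if y = p then 1 else 0)) := by
      by_cases hc2 : ∃ j, 2 ≤ c j
      · obtain ⟨j, hj⟩ := hc2
        rcases eq_or_ne j a with rfl | hja
        · refine ⟨j, by omega, b, Ne.symm hab, hb, Or.inr ⟨j, b, hab, ?_, ?_⟩⟩
          · simp; omega
          · rw [if_neg (Ne.symm hab)]; omega
        · refine ⟨j, by omega, a, Ne.symm hja, ha, Or.inr ⟨j, a, hja, ?_, ?_⟩⟩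
          · simp; omega
          · rw [if_neg (Ne.symm hja)]; omega
      · push_neg at hc2
        rcases eq_or_lt_of_le hs2 with hs2e | hs3
        · exact ⟨a, ha, b, Ne.symm hab, hb, Or.inl hs2e.symm⟩
        · have hd : ∃ d, d ≠ a ∧ d ≠ b ∧ 0 < c d := by
            by_contra hno
            push_neg at hno
            have hzero : ∀ x ∈ Finset.univ, x ∉ ({a, b} : Finset (Fin m)) → c x = 0 := by
              intro x _ hx
              simp only [Finset.mem_insert, Finset.mem_singleton] at hx
              push_neg at hx
              have := hno x hx.1 hx.2
              omega
            have hsum := Finset.sum_subset (Finset.subset_univ ({a, b} : Finset (Fin m))) hzero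
            rw [Finset.sum_pair hab] at hsum
            have h2a := hc2 a
            have h2b := hc2 b
            omega
          obtain ⟨d, hda, hdb, hd⟩ := hd
          refine ⟨a, ha, b, Ne.symm hab, hb, Or.inr ⟨b, d, Ne.symm hdb, ?_, ?_⟩⟩
          · rw [if_neg (Ne.symm hab)]; omega
          · rw [if_neg hda]; omega
    set c' : Fin m → ℕ := fun j => c j - (if j = p then 1 else 0) with hc'
    have hc'q : c' q = c q := by simp [hc', hqp]
    have hsum' : (∑ j, c' j) = s - 1 := by
      have h1' := Finset.add_sum_erase Finset.univ c (Finset.mem_univ p)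
      have h2' := Finset.add_sum_erase Finset.univ c' (Finset.mem_univ p)
      have h3' : ∑ j ∈ Finset.univ.erase p, c' j = ∑ j ∈ Finset.univ.erase p, c j :=
        Finset.sum_congr rfl fun j hj => by simp [hc', Finset.ne_of_mem_erase hj]
      have hc'p : c' p = c p - 1 := by simp [hc']
      omega
    -- choose k
    have hkex : ∃ k : ℤ, k ≤ (N : ℤ) ∧ K - k ≤ ((s : ℤ) - 1) * N ∧
        (fun j => (c' j : ℤ) + (K - k) * α j) ≠ (Pi.single p 1 + k • α : Fin m → ℤ) := by
      rcases eq_or_lt_of_le hK with hKb | hKi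
      · refine ⟨(N : ℤ), le_refl _, by linarith, ?_⟩
        intro h
        have hq' := congrFun h q
        simp [Pi.single_apply, hqp, smul_eq_mul] at hq'
        have hcq : (1 : ℤ) ≤ (c' q : ℤ) := by
          have : 0 < c' q := by rw [hc'q]; exact hq
          exact_mod_cast this
        have hs2' : (2 : ℤ) ≤ (s : ℤ) := by exact_mod_cast hs2
        have key : 0 ≤ ((s : ℤ) - 2) * ((N : ℤ) * α q) :=
          mul_nonneg (by linarith) (mul_nonneg (by positivity) (hα q).le)
        rw [hKb] at hq'
        nlinarith [hq', key, hcq]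
      · by_cases hbad : (fun j => (c' j : ℤ) + (K - N) * α j) = (Pi.single p 1 + (N : ℤ) • α : Fin m → ℤ)
        · refine ⟨(N : ℤ) - 1, by linarith, by linarith, ?_⟩
          intro h'
          have e1 := congrFun hbad p
          have e2 := congrFun h' p
          simp only [Pi.add_apply, Pi.single_apply, if_pos rfl, Pi.smul_apply, smul_eq_mul] at e1 e2
          have := hα p
          nlinarith [e1, e2]
        · exact ⟨(N : ℤ), le_refl _, by linarith, hbad⟩
    obtain ⟨k, hkN, hkK, hknot⟩ := hkex
    have hβg : good (Pi.single p 1 + k • α) := hL1 p k hkN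
    have hμg : good (fun j => (c' j : ℤ) + (K - k) * α j) := by
      rcases hsplit with hs2e | ⟨x, y, hxy, hx, hy⟩
      · -- s = 2 : c' is an indicator
        have hsum1 : (∑ j, c' j) = 1 := by omega
        obtain ⟨q', hq'⟩ := hsingle c' hsum1
        have hKN : K - k ≤ (N : ℤ) := by
          rw [hs2e] at hkK; push_cast at hkK; linarith
        have h := hL1 q' (K - k) hKN
        have he : (Pi.single q' 1 + (K - k) • α : Fin m → ℤ) =
            (fun j => (c' j : ℤ) + (K - k) * α j) := by
          funext j
          rw [hq']
          rcases eq_or_ne j q' with rfl | hjq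
          · simp [smul_eq_mul]
          · simp [Pi.single_apply, hjq, smul_eq_mul]
        rwa [he] at h
      · have hcast : ((s - 1 : ℕ) : ℤ) = (s : ℤ) - 1 := by
          have : 1 ≤ s := by omega
          push_cast [Nat.cast_sub this]; ring
        exact IH (s - 1) (by omega) c' ⟨x, y, hxy, hx, hy⟩ hsum' (K - k) (by rw [hcast]; exact hkK)
    have h := hST _ _ hμg hβg hknot
    have he : (fun j => (c' j : ℤ) + (K - k) * α j) + (Pi.single p 1 + k • α) =
        (fun j => (c j : ℤ) + K * α j) := by
      funext j
      simp only [Pi.add_apply, Pi.single_apply, Pi.smul_apply, smul_eq_mul, hc']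
      rcases eq_or_ne j p with rfl | hjp
      · rw [if_pos rfl, if_pos rfl, Nat.cast_sub hp]
        push_cast; ring
      · rw [if_neg hjp, if_neg hjp, Nat.sub_zero]
        ring
    rwa [he] at h
  -- every graded component annihilates v
  have hAll : ∀ γ : Fin m → ℤ, good γ := by
    intro γ
    set T : ℕ := 1 + ∑ j, (γ j).natAbs with hT
    have hpos : ∀ j, 0 < γ j + (T : ℤ) * α j := by
      intro j
      have hTj : 1 + (γ j).natAbs ≤ T := by
        have h0 : (γ j).natAbs ≤ ∑ i, (γ i).natAbs := by
          simpa using Finset.single_le_sum (f := fun i => (γ i).natAbs)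
            (fun _ _ => Nat.zero_le _) (Finset.mem_univ j)
        omega
      have hTj' : 1 + ((γ j).natAbs : ℤ) ≤ (T : ℤ) := by exact_mod_cast hTj
      have h2' : -(γ j) ≤ ((γ j).natAbs : ℤ) := by
        rw [← Int.abs_eq_natAbs]; exact neg_le_abs _
      have h3' : (T : ℤ) * 1 ≤ (T : ℤ) * α j :=
        mul_le_mul_of_nonneg_left (hα j) (by positivity)
      linarith
    set c : Fin m → ℕ := fun j => (γ j + (T : ℤ) * α j).toNat with hc
    have hcast : ∀ j, (c j : ℤ) = γ j + (T : ℤ) * α j := fun j => Int.toNat_of_nonneg (hpos j).le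
    obtain ⟨a, b, hab⟩ := exists_pair_ne (Fin m)
    have hca : 0 < c a := by
      have := hpos a; have := hcast a; omega
    have hcb : 0 < c b := by
      have := hpos b; have := hcast b; omega
    have h := hNC (∑ j, c j) c ⟨a, b, hab, hca, hcb⟩ rfl (-(T : ℤ))
      (by
        have : (0 : ℤ) ≤ ((∑ j, c j : ℕ) : ℤ) * N := by positivity
        linarith)
    have he : (fun j => (c j : ℤ) + (-(T : ℤ)) * α j) = γ := funext fun j => by
      rw [hcast j]; ring
    rwa [he] at h
  -- first conjunct
  have hMain : ∀ x : WSp m n, ρ x v = 0 := by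
    intro x
    induction x using Finsupp.induction_linear with
    | zero => simp
    | add f g hf hg => rw [map_add]; simp [LinearMap.add_apply, hf, hg]
    | single u t =>
      have hsm : (Finsupp.single u t : WSp m n) = t • Finsupp.single u 1 := by
        rw [Finsupp.smul_single, smul_eq_mul, mul_one]
      rw [hsm, map_smul]
      have := hAll u.1 u.2.1 u.2.2
      simp only [LinearMap.smul_apply]
      rw [this, smul_zero]
  refine ⟨hMain, ?_⟩
  intro hsimple hhom hnontriv
  obtain ⟨p, hvp⟩ := hhom
  obtain ⟨x, u, hxu⟩ := hnontriv
  set P : Submodule ℂ V := Submodule.span ℂ {v} with hP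
  have hPg : P ≤ gV p := Submodule.span_le.mpr (by simpa using hvp)
  have hgr : P = (P ⊓ gV 0) ⊔ (P ⊓ gV 1) := by
    have hp01 : ∀ r : ZMod 2, r = 0 ∨ r = 1 := by decide
    apply le_antisymm
    · rcases hp01 p with rfl | rfl
      · exact le_trans (le_inf le_rfl hPg) le_sup_left
      · exact le_trans (le_inf le_rfl hPg) le_sup_right
    · exact sup_le inf_le_left inf_le_left
  have hinv : ∀ y : WSp m n, ∀ w ∈ P, ρ y w ∈ P := by
    intro y w hw
    obtain ⟨t, rfl⟩ := Submodule.mem_span_singleton.mp hw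
    rw [map_smul, hMain y, smul_zero]
    exact zero_mem P
  rcases hsimple P hgr hinv with hbot | htop
  · have hvP : v ∈ P := Submodule.mem_span_singleton_self v
    rw [hbot] at hvP
    simpa using hvP
  · exfalso
    have huP : u ∈ P := htop ▸ Submodule.mem_top
    obtain ⟨t, rfl⟩ := Submodule.mem_span_singleton.mp huP
    apply hxu
    rw [map_smul, hMain x, smul_zero]
end
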